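/- arXiv:1309.4869 — 4 statements merged into one kernel-verified Lean document; each statement's English description precedes it below -/
import Mathlib

section
/- Let g₁, g₂ : [0,T] → H be continuous controls, let (u₁,u₁') and (u₂,u₂') be strong solutions of the parabolic variational inequality with controls g₁ and g₂ respectively (same initial value u_b), let μ ∈ [0,1], set g₃(t) = μg₁(t)+(1−μ)g₂(t), u₃(t) = μu₁(t)+(1−μ)u₂(t), and let (u₄,u₄') be a strong solution with control g₃ and initial value u_b. Define α(t) = ⟨u₁'(t), i(u₂(t))−i(u₁(t))⟩_H + a(u₁(t), u₂(t)−u₁(t)) + Φ(u₂(t)) − Φ(u₁(t)) − ⟨g₁(t), i(u₂(t))−i(u₁(t))⟩_H, β(t) = ⟨u₂'(t), i(u₁(t))−i(u₂(t))⟩_H + a(u₂(t), u₁(t)−u₂(t)) + Φ(u₁(t)) − Φ(u₂(t)) − ⟨g₂(t), i(u₁(t))−i(u₂(t))⟩_H, I₁₄(t) = ⟨u₁'(t), i(u₄(t))−i(u₁(t))⟩_H + a(u₁(t), u₄(t)−u₁(t)) + Φ(u₄(t)) − Φ(u₁(t)) − ⟨g₁(t), i(u₄(t))−i(u₁(t))⟩_H,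 and I₂₄(t) analogously with (u₂,u₂',g₂). If ∫₀ᵀ α(t) dt = 0 and ∫₀ᵀ β(t) dt = 0, then for every t ∈ [0,T]: u₄(t) = u₃(t), I₁₄(t) = 0, I₂₄(t) = 0, and Φ(u₃(t)) = μΦ(u₁(t)) + (1−μ)Φ(u₂(t)). -/
open scoped RealInnerProductSpace



open MeasureTheory intervalIntegral in
lemma aux_zero_of_integral_zero {f : ℝ → ℝ} {T : ℝ} (hT : 0 < T) (hf : Continuous f)
    (h0 : ∀ t ∈ Set.Icc (0:ℝ) T, 0 ≤ f t) (hint : ∫ t in (0:ℝ)..T, f t = 0) :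
    ∀ t ∈ Set.Icc (0:ℝ) T, f t = 0 := by
  have hfi : IntervalIntegrable f volume 0 T := hf.intervalIntegrable _ _
  have hae : 0 ≤ᵐ[volume.restrict (Set.Ioc (0:ℝ) T)] f := by
    filter_upwards [ae_restrict_mem measurableSet_Ioc] with x hx
    exact h0 x ⟨hx.1.le, hx.2⟩
  have h := (integral_eq_zero_iff_of_le_of_nonneg_ae hT.le hae hfi).mp hint
  rw [Measure.restrict_congr_set Ioc_ae_eq_Icc] at h
  exact Measure.eqOn_Icc_of_ae_eq volume hT.ne h hf.continuousOn continuousOn_const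

/-- A strong solution of the parabolic variational inequality of the second kind:
`u : [0,T] → K` and `u' : [0,T] → H` are continuous, `i ∘ u` has derivative
`u'(t)` at every `t ∈ [0,T]`, `u(0) = u_b`, and for every `t ∈ [0,T]` and `v ∈ K`:
`⟨u'(t), i v − i u(t)⟩_H + a(u(t), v − u(t)) + Φ(v) − Φ(u(t)) ≥ ⟨g(t), i v − i u(t)⟩_H`. -/
def IsStrongSolution {V H : Type*} [NormedAddCommGroup V] [InnerProductSpace ℝ V]
    [NormedAddCommGroup H] [InnerProductSpace ℝ H]
    (i : V →L[ℝ] H) (a : V →L[ℝ] V →L[ℝ] ℝ) (Φ : V → ℝ) (K : Set V)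
    (T : ℝ) (u_b : V) (g : ℝ → H) (u : ℝ → V) (u' : ℝ → H) : Prop :=
  Continuous u ∧ Continuous u' ∧
  (∀ t ∈ Set.Icc (0 : ℝ) T, u t ∈ K) ∧
  (∀ t ∈ Set.Icc (0 : ℝ) T, HasDerivAt (fun s => i (u s)) (u' t) t) ∧
  u 0 = u_b ∧
  ∀ t ∈ Set.Icc (0 : ℝ) T, ∀ v ∈ K,
    ⟪u' t, i v - i (u t)⟫ + a (u t) (v - u t) + Φ v - Φ (u t)
      ≥ ⟪g t, i v - i (u t)⟫

set_option maxHeartbeats 1000000 in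
/-- If `∫₀ᵀ α = 0` and `∫₀ᵀ β = 0` then `u₄ = u₃ = μu₁ + (1−μ)u₂` on `[0,T]`,
`I₁₄ = I₂₄ = 0` on `[0,T]`, and `Φ(u₃) = μΦ(u₁) + (1−μ)Φ(u₂)` on `[0,T]`
(Corollary 2.3 of the paper). -/
theorem stmt_1 {V H : Type*} [NormedAddCommGroup V] [InnerProductSpace ℝ V]
    [NormedAddCommGroup H] [InnerProductSpace ℝ H]
    (i : V →L[ℝ] H) (hi_inj : Function.Injective i) (hi_dense : DenseRange i)
    (a : V →L[ℝ] V →L[ℝ] ℝ) (ha_symm : ∀ u v : V, a u v = a v u)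
    (lam : ℝ) (hlam : 0 < lam) (ha_coer : ∀ v : V, lam * ‖v‖ ^ 2 ≤ a v v)
    (Φ : V → ℝ) (hΦ_conv : ConvexOn ℝ Set.univ Φ) (hΦ_cont : Continuous Φ)
    (K : Set V) (hK_ne : K.Nonempty) (hK_closed : IsClosed K) (hK_conv : Convex ℝ K)
    (T : ℝ) (hT : 0 < T) (u_b : V) (hub : u_b ∈ K)
    (g₁ g₂ : ℝ → H) (hg₁ : Continuous g₁) (hg₂ : Continuous g₂)
    (u₁ u₂ u₄ : ℝ → V) (u₁' u₂' u₄' : ℝ → H)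
    (h₁ : IsStrongSolution i a Φ K T u_b g₁ u₁ u₁')
    (h₂ : IsStrongSolution i a Φ K T u_b g₂ u₂ u₂')
    (μ : ℝ) (hμ : μ ∈ Set.Icc (0 : ℝ) 1)
    (h₄ : IsStrongSolution i a Φ K T u_b
      (fun t => μ • g₁ t + (1 - μ) • g₂ t) u₄ u₄')
    (u₃ : ℝ → V) (hu₃ : ∀ t, u₃ t = μ • u₁ t + (1 - μ) • u₂ t)
    (I₁₄ I₂₄ α β : ℝ → ℝ)
    (hI₁₄ : ∀ t, I₁₄ t = ⟪u₁' t, i (u₄ t) - i (u₁ t)⟫ + a (u₁ t) (u₄ t - u₁ t)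
      + Φ (u₄ t) - Φ (u₁ t) - ⟪g₁ t, i (u₄ t) - i (u₁ t)⟫)
    (hI₂₄ : ∀ t, I₂₄ t = ⟪u₂' t, i (u₄ t) - i (u₂ t)⟫ + a (u₂ t) (u₄ t - u₂ t)
      + Φ (u₄ t) - Φ (u₂ t) - ⟪g₂ t, i (u₄ t) - i (u₂ t)⟫)
    (hα : ∀ t, α t = ⟪u₁' t, i (u₂ t) - i (u₁ t)⟫ + a (u₁ t) (u₂ t - u₁ t)
      + Φ (u₂ t) - Φ (u₁ t) - ⟪g₁ t, i (u₂ t) - i (u₁ t)⟫)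
    (hβ : ∀ t, β t = ⟪u₂' t, i (u₁ t) - i (u₂ t)⟫ + a (u₂ t) (u₁ t - u₂ t)
      + Φ (u₁ t) - Φ (u₂ t) - ⟪g₂ t, i (u₁ t) - i (u₂ t)⟫)
    (hα0 : ∫ t in (0 : ℝ)..T, α t = 0) (hβ0 : ∫ t in (0 : ℝ)..T, β t = 0) :
    ∀ t ∈ Set.Icc (0 : ℝ) T,
      u₄ t = u₃ t ∧ I₁₄ t = 0 ∧ I₂₄ t = 0 ∧
      Φ (u₃ t) = μ * Φ (u₁ t) + (1 - μ) * Φ (u₂ t) := by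
  obtain ⟨hu₁c, hu₁'c, hu₁K, hu₁d, hu₁0, hVI₁⟩ := h₁
  obtain ⟨hu₂c, hu₂'c, hu₂K, hu₂d, hu₂0, hVI₂⟩ := h₂
  obtain ⟨hu₄c, hu₄'c, hu₄K, hu₄d, hu₄0, hVI₄⟩ := h₄
  obtain ⟨hμ0, hμ1⟩ := hμ
  have h1μ : (0:ℝ) ≤ 1 - μ := by linarith
  -- continuity of α and β
  have hic : Continuous (⇑i) := i.continuous
  have hαc : Continuous α := by
    rw [funext hα]
    exact (((hu₁'c.inner ((hic.comp hu₂c).sub (hic.comp hu₁c))).add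
      (a.continuous₂.comp (hu₁c.prodMk (hu₂c.sub hu₁c)))).add
      ((hΦ_cont.comp hu₂c).sub (hΦ_cont.comp hu₁c))).sub
      (hg₁.inner ((hic.comp hu₂c).sub (hic.comp hu₁c))) |>.congr (fun t => by simp [Function.uncurry]; ring)
  have hβc : Continuous β := by
    rw [funext hβ]
    exact (((hu₂'c.inner ((hic.comp hu₁c).sub (hic.comp hu₂c))).add
      (a.continuous₂.comp (hu₂c.prodMk (hu₁c.sub hu₂c)))).add
      ((hΦ_cont.comp hu₁c).sub (hΦ_cont.comp hu₂c))).sub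
      (hg₂.inner ((hic.comp hu₁c).sub (hic.comp hu₂c))) |>.congr (fun t => by simp [Function.uncurry]; ring)
  -- nonnegativity of α, β on [0,T]
  have hαnn : ∀ t ∈ Set.Icc (0:ℝ) T, 0 ≤ α t := by
    intro t ht
    have := hVI₁ t ht (u₂ t) (hu₂K t ht)
    rw [hα]; linarith
  have hβnn : ∀ t ∈ Set.Icc (0:ℝ) T, 0 ≤ β t := by
    intro t ht
    have := hVI₂ t ht (u₁ t) (hu₁K t ht)
    rw [hβ]; linarith
  have hαz := aux_zero_of_integral_zero hT hαc hαnn hα0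
  have hβz := aux_zero_of_integral_zero hT hβc hβnn hβ0
  -- u₃ values in K
  have hu₃K : ∀ t ∈ Set.Icc (0:ℝ) T, u₃ t ∈ K := by
    intro t ht
    rw [hu₃]
    exact hK_conv (hu₁K t ht) (hu₂K t ht) hμ0 h1μ (by ring)
  -- convexity inequality for Φ along u₃
  have hcv : ∀ t : ℝ, Φ (μ • u₁ t + (1 - μ) • u₂ t) ≤ μ * Φ (u₁ t) + (1 - μ) * Φ (u₂ t) := by
    intro t
    simpa [smul_eq_mul] using
      hΦ_conv.2 (Set.mem_univ (u₁ t)) (Set.mem_univ (u₂ t)) hμ0 h1μ (by ring)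
  -- u₃ satisfies the variational inequality with control g₃
  have hVI₃ : ∀ t ∈ Set.Icc (0:ℝ) T, ∀ v ∈ K,
      ⟪μ • u₁' t + (1 - μ) • u₂' t, i v - i (u₃ t)⟫ + a (u₃ t) (v - u₃ t)
        + Φ v - Φ (u₃ t) ≥ ⟪μ • g₁ t + (1 - μ) • g₂ t, i v - i (u₃ t)⟫ := by
    intro t ht v hv
    have A := hVI₁ t ht v hv
    have B := hVI₂ t ht v hv
    have hat := hαz t ht; rw [hα] at hat
    have hbt := hβz t ht; rw [hβ] at hbt
    have hcvt := hcv t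
    rw [hu₃]
    have hsymm : a (u₂ t) (u₁ t) = a (u₁ t) (u₂ t) := ha_symm _ _
    simp only [map_add, map_smul, map_sub, ContinuousLinearMap.add_apply,
      ContinuousLinearMap.coe_smul', Pi.smul_apply, smul_eq_mul,
      inner_add_left, inner_add_right, inner_sub_left, inner_sub_right,
      real_inner_smul_left, real_inner_smul_right, hsymm] at A B hat hbt ⊢
    nlinarith [mul_nonneg hμ0 (sub_nonneg.mpr A), mul_nonneg h1μ (sub_nonneg.mpr B),
      mul_self_nonneg μ, congrArg (fun x => μ * (1 - μ) * x) hat,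
      congrArg (fun x => μ * (1 - μ) * x) hbt]
  -- the energy function
  set z : ℝ → H := fun t => i (u₄ t) - i (u₃ t) with hz
  have hu₃c : Continuous u₃ := by
    rw [funext hu₃]
    exact (hu₁c.const_smul μ).add (hu₂c.const_smul (1 - μ))
  have hzc : Continuous z := (hic.comp hu₄c).sub (hic.comp hu₃c)
  have hfc : Continuous (fun t => ⟪z t, z t⟫) := hzc.inner hzc
  have hu₃d : ∀ t ∈ Set.Icc (0:ℝ) T,
      HasDerivAt (fun s => i (u₃ s)) (μ • u₁' t + (1 - μ) • u₂' t) t := by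
    intro t ht
    have h1 := ((hu₁d t ht).const_smul μ).add ((hu₂d t ht).const_smul (1 - μ))
    have heq : (fun s => i (u₃ s)) = fun s => μ • i (u₁ s) + (1 - μ) • i (u₂ s) := by
      funext s; rw [hu₃ s]; simp
    rw [heq]; exact h1
  have hzd : ∀ t ∈ Set.Icc (0:ℝ) T,
      HasDerivAt z (u₄' t - (μ • u₁' t + (1 - μ) • u₂' t)) t := by
    intro t ht
    exact (hu₄d t ht).sub (hu₃d t ht)
  have hfd : ∀ t ∈ Set.Icc (0:ℝ) T,
      HasDerivAt (fun s => ⟪z s, z s⟫)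
        (2 * ⟪u₄' t - (μ • u₁' t + (1 - μ) • u₂' t), z t⟫) t := by
    intro t ht
    have := (hzd t ht).inner ℝ (hzd t ht)
    refine this.congr_deriv ?_
    rw [real_inner_comm]; ring
  have hderiv_nonpos : ∀ t ∈ Set.Icc (0:ℝ) T,
      2 * ⟪u₄' t - (μ • u₁' t + (1 - μ) • u₂' t), z t⟫ ≤ 0 := by
    intro t ht
    have C := hVI₄ t ht (u₃ t) (hu₃K t ht)
    have D := hVI₃ t ht (u₄ t) (hu₄K t ht)
    have hco := ha_coer (u₄ t - u₃ t)
    have hnn : (0:ℝ) ≤ lam * ‖u₄ t - u₃ t‖ ^ 2 :=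
      mul_nonneg hlam.le (by positivity)
    have hsymm : a (u₃ t) (u₄ t) = a (u₄ t) (u₃ t) := ha_symm _ _
    simp only [hz, map_sub, ContinuousLinearMap.sub_apply, inner_sub_left,
      inner_sub_right, hsymm] at C D hco ⊢
    linarith
  -- f is antitone on [0,T]
  have hanti : AntitoneOn (fun t => ⟪z t, z t⟫) (Set.Icc 0 T) := by
    apply antitoneOn_of_deriv_nonpos (convex_Icc 0 T) hfc.continuousOn
    · intro x hx
      rw [interior_Icc] at hx
      exact (hfd x ⟨hx.1.le, hx.2.le⟩).differentiableAt.differentiableWithinAt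
    · intro x hx
      rw [interior_Icc] at hx
      have hx' : x ∈ Set.Icc (0:ℝ) T := ⟨hx.1.le, hx.2.le⟩
      rw [(hfd x hx').deriv]
      exact hderiv_nonpos x hx'
  have hu₃0 : u₃ 0 = u_b := by
    rw [hu₃, hu₁0, hu₂0, ← add_smul]; simp
  have hf0 : ⟪z 0, z 0⟫ = 0 := by
    simp [hz, hu₄0, hu₃0]
  -- conclude u₄ = u₃ on [0,T]
  intro t ht
  have hft : ⟪z t, z t⟫ = 0 := by
    have h1 : ⟪z t, z t⟫ ≤ ⟪z 0, z 0⟫ := hanti (Set.left_mem_Icc.mpr hT.le) ht ht.1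
    have h2 : (0:ℝ) ≤ ⟪z t, z t⟫ := real_inner_self_nonneg
    rw [hf0] at h1
    linarith
  have hzt : z t = 0 := inner_self_eq_zero.mp hft
  have h43 : u₄ t = u₃ t := hi_inj (by rw [← sub_eq_zero]; exact hzt)
  refine ⟨h43, ?_, ?_, ?_⟩
  · -- I₁₄ t = 0
    have E := hVI₁ t ht (u₄ t) (hu₄K t ht)
    have hat := hαz t ht; rw [hα] at hat
    have hcvt := hcv t
    rw [hI₁₄, h43, hu₃ t]
    rw [h43, hu₃ t] at E
    simp only [map_add, map_smul, inner_add_right, inner_sub_right,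
      real_inner_smul_right, map_sub, ContinuousLinearMap.add_apply,
      ContinuousLinearMap.coe_smul', Pi.smul_apply, smul_eq_mul] at E hat ⊢
    nlinarith [congrArg (fun x => (1 - μ) * x) hat]
  · -- I₂₄ t = 0
    have E := hVI₂ t ht (u₄ t) (hu₄K t ht)
    have hbt := hβz t ht; rw [hβ] at hbt
    have hcvt := hcv t
    rw [hI₂₄, h43, hu₃ t]
    rw [h43, hu₃ t] at E
    simp only [map_add, map_smul, inner_add_right, inner_sub_right,
      real_inner_smul_right, map_sub, ContinuousLinearMap.add_apply,
      ContinuousLinearMap.coe_smul', Pi.smul_apply, smul_eq_mul] at E hbt ⊢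
    nlinarith [congrArg (fun x => μ * x) hbt]
  · -- Φ equality
    have E := hVI₁ t ht (u₄ t) (hu₄K t ht)
    have hat := hαz t ht; rw [hα] at hat
    have hcvt := hcv t
    rw [hu₃ t]
    rw [h43, hu₃ t] at E
    simp only [map_add, map_smul, inner_add_right, inner_sub_right,
      real_inner_smul_right, map_sub, ContinuousLinearMap.add_apply,
      ContinuousLinearMap.coe_smul', Pi.smul_apply, smul_eq_mul] at E hat ⊢
    nlinarith [congrArg (fun x => (1 - μ) * x) hat]
end

section
/- Let g₁, g₂ : [0,T] → H be continuous controls and let (u₁,u₁') and (u₂,u₂') be strong solutions of the parabolic variational inequality with controls g₁ and g₂ respectively, with the same initial value u_b. Then for every τ ∈ [0,T]: (1/2)‖i(u₁(τ)) − i(u₂(τ))‖_H² + λ ∫₀^τ ‖u₁(t)−u₂(t)‖_V² dt ≤ ∫₀^τ ⟨g₁(t)−g₂(t), i(u₁(t))−i(u₂(t))⟩_H dt. -/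
open scoped RealInnerProductSpace

theorem stmt_3' {V H : Type*} [NormedAddCommGroup V] [InnerProductSpace ℝ V]
    [NormedAddCommGroup H] [InnerProductSpace ℝ H]
    (i : V →L[ℝ] H)
    (a : V →L[ℝ] V →L[ℝ] ℝ)
    (lam : ℝ) (hlam : 0 < lam) (ha_coer : ∀ v : V, lam * ‖v‖ ^ 2 ≤ a v v)
    (Φ : V → ℝ)
    (K : Set V)
    (T : ℝ) (hT : 0 < T) (u_b : V)
    (g₁ g₂ : ℝ → H) (hg₁ : Continuous g₁) (hg₂ : Continuous g₂)
    (u₁ u₂ : ℝ → V) (u₁' u₂' : ℝ → H)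
    (hc₁ : Continuous u₁) (hc₁' : Continuous u₁')
    (hK₁ : ∀ t ∈ Set.Icc (0 : ℝ) T, u₁ t ∈ K)
    (hd₁ : ∀ t ∈ Set.Icc (0 : ℝ) T, HasDerivAt (fun s => i (u₁ s)) (u₁' t) t)
    (h0₁ : u₁ 0 = u_b)
    (hvi₁ : ∀ t ∈ Set.Icc (0 : ℝ) T, ∀ v ∈ K,
      ⟪u₁' t, i v - i (u₁ t)⟫ + a (u₁ t) (v - u₁ t) + Φ v - Φ (u₁ t)
        ≥ ⟪g₁ t, i v - i (u₁ t)⟫)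
    (hc₂ : Continuous u₂) (hc₂' : Continuous u₂')
    (hK₂ : ∀ t ∈ Set.Icc (0 : ℝ) T, u₂ t ∈ K)
    (hd₂ : ∀ t ∈ Set.Icc (0 : ℝ) T, HasDerivAt (fun s => i (u₂ s)) (u₂' t) t)
    (h0₂ : u₂ 0 = u_b)
    (hvi₂ : ∀ t ∈ Set.Icc (0 : ℝ) T, ∀ v ∈ K,
      ⟪u₂' t, i v - i (u₂ t)⟫ + a (u₂ t) (v - u₂ t) + Φ v - Φ (u₂ t)
        ≥ ⟪g₂ t, i v - i (u₂ t)⟫)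
    (τ : ℝ) (hτ : τ ∈ Set.Icc (0 : ℝ) T) :
    (1 / 2) * ‖i (u₁ τ) - i (u₂ τ)‖ ^ 2
      + lam * ∫ t in (0 : ℝ)..τ, ‖u₁ t - u₂ t‖ ^ 2
      ≤ ∫ t in (0 : ℝ)..τ, ⟪g₁ t - g₂ t, i (u₁ t) - i (u₂ t)⟫ := by
  obtain ⟨hτ0, hτT⟩ := hτ
  set w : ℝ → H := fun t => i (u₁ t) - i (u₂ t) with hw
  have hwc : Continuous w := ((i.continuous.comp hc₁).sub (i.continuous.comp hc₂))
  -- pointwise key inequality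
  have key : ∀ t ∈ Set.Icc (0 : ℝ) T,
      ⟪u₁' t - u₂' t, w t⟫ + lam * ‖u₁ t - u₂ t‖ ^ 2 ≤ ⟪g₁ t - g₂ t, w t⟫ := by
    intro t ht
    have A := hvi₁ t ht (u₂ t) (hK₂ t ht)
    have B := hvi₂ t ht (u₁ t) (hK₁ t ht)
    have hco := ha_coer (u₁ t - u₂ t)
    have hb : a (u₁ t) (u₂ t - u₁ t) + a (u₂ t) (u₁ t - u₂ t)
        = -(a (u₁ t - u₂ t) (u₁ t - u₂ t)) := by
      simp [map_sub, ContinuousLinearMap.sub_apply]; ring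
    simp only [hw, inner_sub_left, inner_sub_right] at *
    linarith
  -- FTC: (1/2)‖w τ‖² = ∫₀^τ ⟪u₁' - u₂', w⟫
  have hderiv : ∀ t ∈ Set.uIcc (0 : ℝ) τ,
      HasDerivAt (fun s => (1 / 2 : ℝ) * ⟪w s, w s⟫) ⟪u₁' t - u₂' t, w t⟫ t := by
    intro t ht
    rw [Set.uIcc_of_le hτ0] at ht
    have ht' : t ∈ Set.Icc (0 : ℝ) T := ⟨ht.1, ht.2.trans hτT⟩
    have hdw : HasDerivAt w (u₁' t - u₂' t) t := (hd₁ t ht').sub (hd₂ t ht')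
    have := (hdw.inner ℝ hdw).const_mul (1 / 2 : ℝ)
    have e : ⟪u₁' t - u₂' t, w t⟫
        = 1 / 2 * (⟪w t, u₁' t - u₂' t⟫ + ⟪u₁' t - u₂' t, w t⟫) := by
      rw [real_inner_comm (w t) (u₁' t - u₂' t)]
      ring
    rw [e]
    exact this
  have hcont_d : Continuous fun t => ⟪u₁' t - u₂' t, w t⟫ :=
    (hc₁'.sub hc₂').inner hwc
  have hftc : ∫ t in (0 : ℝ)..τ, ⟪u₁' t - u₂' t, w t⟫
      = (1 / 2 : ℝ) * ⟪w τ, w τ⟫ - (1 / 2 : ℝ) * ⟪w 0, w 0⟫ :=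
    intervalIntegral.integral_eq_sub_of_hasDerivAt hderiv
      (hcont_d.intervalIntegrable 0 τ)
  have hw0 : w 0 = 0 := by simp [hw, h0₁, h0₂]
  have hwτ : (1 / 2 : ℝ) * ⟪w τ, w τ⟫ = (1 / 2) * ‖i (u₁ τ) - i (u₂ τ)‖ ^ 2 := by
    rw [real_inner_self_eq_norm_sq]
  -- integral monotonicity
  have hint1 : IntervalIntegrable
      (fun t => ⟪u₁' t - u₂' t, w t⟫ + lam * ‖u₁ t - u₂ t‖ ^ 2) MeasureTheory.volume 0 τ :=
    (hcont_d.add (continuous_const.mul (((hc₁.sub hc₂).norm).pow 2))).intervalIntegrable 0 τ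
  have hint2 : IntervalIntegrable
      (fun t => ⟪g₁ t - g₂ t, w t⟫) MeasureTheory.volume 0 τ :=
    ((hg₁.sub hg₂).inner hwc).intervalIntegrable 0 τ
  have hmono := intervalIntegral.integral_mono_on hτ0 hint1 hint2
    (fun t ht => key t ⟨ht.1, ht.2.trans hτT⟩)
  rw [intervalIntegral.integral_add (hcont_d.intervalIntegrable 0 τ)
      ((show Continuous (fun t => lam * ‖u₁ t - u₂ t‖ ^ 2) from
        continuous_const.mul (((hc₁.sub hc₂).norm).pow 2)).intervalIntegrable 0 τ),
    intervalIntegral.integral_const_mul, hftc, hw0] at hmono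
  simp only [inner_zero_left, mul_zero, sub_zero] at hmono
  rw [hwτ] at hmono
  exact hmono



/-- For two strong solutions `u₁, u₂` of the parabolic variational inequality with
controls `g₁, g₂` and the same initial value, for every `τ ∈ [0,T]`:
`(1/2)‖i u₁(τ) − i u₂(τ)‖² + λ∫₀^τ ‖u₁ − u₂‖_V² ≤ ∫₀^τ ⟨g₁ − g₂, i u₁ − i u₂⟩`. -/
theorem stmt_3 {V H : Type*} [NormedAddCommGroup V] [InnerProductSpace ℝ V]
    [NormedAddCommGroup H] [InnerProductSpace ℝ H]
    (i : V →L[ℝ] H) (hi_inj : Function.Injective i) (hi_dense : DenseRange i)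
    (a : V →L[ℝ] V →L[ℝ] ℝ) (ha_symm : ∀ u v : V, a u v = a v u)
    (lam : ℝ) (hlam : 0 < lam) (ha_coer : ∀ v : V, lam * ‖v‖ ^ 2 ≤ a v v)
    (Φ : V → ℝ) (hΦ_conv : ConvexOn ℝ Set.univ Φ) (hΦ_cont : Continuous Φ)
    (K : Set V) (hK_ne : K.Nonempty) (hK_closed : IsClosed K) (hK_conv : Convex ℝ K)
    (T : ℝ) (hT : 0 < T) (u_b : V) (hub : u_b ∈ K)
    (g₁ g₂ : ℝ → H) (hg₁ : Continuous g₁) (hg₂ : Continuous g₂)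
    (u₁ u₂ : ℝ → V) (u₁' u₂' : ℝ → H)
    (h₁ : IsStrongSolution i a Φ K T u_b g₁ u₁ u₁')
    (h₂ : IsStrongSolution i a Φ K T u_b g₂ u₂ u₂')
    (τ : ℝ) (hτ : τ ∈ Set.Icc (0 : ℝ) T) :
    (1 / 2) * ‖i (u₁ τ) - i (u₂ τ)‖ ^ 2
      + lam * ∫ t in (0 : ℝ)..τ, ‖u₁ t - u₂ t‖ ^ 2
      ≤ ∫ t in (0 : ℝ)..τ, ⟪g₁ t - g₂ t, i (u₁ t) - i (u₂ t)⟫ := by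
  obtain ⟨hc₁, hc₁', hK₁, hd₁, h0₁, hvi₁⟩ := h₁
  obtain ⟨hc₂, hc₂', hK₂, hd₂, h0₂, hvi₂⟩ := h₂
  exact stmt_3' i a lam hlam ha_coer Φ K T hT u_b g₁ g₂ hg₁ hg₂ u₁ u₂ u₁' u₂'
    hc₁ hc₁' hK₁ hd₁ h0₁ hvi₁ hc₂ hc₂' hK₂ hd₂ h0₂ hvi₂ τ hτ
end

section
/- Let g : [0,T] → H be a continuous control and let (u₁,u₁') and (u₂,u₂') be two strong solutions of the parabolic variational inequality with the same control g and the same initial value u_b. Then u₁(t) = u₂(t) for every t ∈ [0,T]. -/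
open scoped RealInnerProductSpace

/-- Uniqueness of strong solutions of the parabolic variational inequality of the
second kind: two strong solutions with the same continuous control `g` and the
same initial value `u_b` coincide on `[0,T]`. -/
theorem stmt_4 {V H : Type*} [NormedAddCommGroup V] [InnerProductSpace ℝ V]
    [NormedAddCommGroup H] [InnerProductSpace ℝ H]
    (i : V →L[ℝ] H) (hi_inj : Function.Injective i) (hi_dense : DenseRange i)
    (a : V →L[ℝ] V →L[ℝ] ℝ) (ha_symm : ∀ u v : V, a u v = a v u)
    (lam : ℝ) (hlam : 0 < lam) (ha_coer : ∀ v : V, lam * ‖v‖ ^ 2 ≤ a v v)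
    (Φ : V → ℝ) (hΦ_conv : ConvexOn ℝ Set.univ Φ) (hΦ_cont : Continuous Φ)
    (K : Set V) (hK_ne : K.Nonempty) (hK_closed : IsClosed K) (hK_conv : Convex ℝ K)
    (T : ℝ) (hT : 0 < T) (u_b : V) (hub : u_b ∈ K)
    (g : ℝ → H) (hg : Continuous g)
    (u₁ u₂ : ℝ → V) (u₁' u₂' : ℝ → H)
    (h₁ : IsStrongSolution i a Φ K T u_b g u₁ u₁')
    (h₂ : IsStrongSolution i a Φ K T u_b g u₂ u₂') :
    ∀ t ∈ Set.Icc (0 : ℝ) T, u₁ t = u₂ t := by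
  obtain ⟨hc1, hc1', hK1, hd1, h01, hvi1⟩ := h₁
  obtain ⟨hc2, hc2', hK2, hd2, h02, hvi2⟩ := h₂
  set f : ℝ → ℝ := fun t => ‖i (u₁ t) - i (u₂ t)‖ ^ 2 with hf
  have hfd : ∀ t ∈ Set.Icc (0 : ℝ) T,
      HasDerivAt f (2 * ⟪u₁' t - u₂' t, i (u₁ t) - i (u₂ t)⟫) t := by
    intro t ht
    have hF : HasDerivAt (fun s => i (u₁ s) - i (u₂ s)) (u₁' t - u₂' t) t :=
      (hd1 t ht).sub (hd2 t ht)
    have := (hF.inner ℝ hF)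
    have h2 : HasDerivAt (fun s => ⟪i (u₁ s) - i (u₂ s), i (u₁ s) - i (u₂ s)⟫)
        (⟪i (u₁ t) - i (u₂ t), u₁' t - u₂' t⟫ + ⟪u₁' t - u₂' t, i (u₁ t) - i (u₂ t)⟫) t := this
    have heq : ∀ s, ⟪i (u₁ s) - i (u₂ s), i (u₁ s) - i (u₂ s)⟫ = f s := by
      intro s; rw [real_inner_self_eq_norm_sq]
    have h3 : ⟪i (u₁ t) - i (u₂ t), u₁' t - u₂' t⟫ + ⟪u₁' t - u₂' t, i (u₁ t) - i (u₂ t)⟫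
        = 2 * ⟪u₁' t - u₂' t, i (u₁ t) - i (u₂ t)⟫ := by
      rw [real_inner_comm (i (u₁ t) - i (u₂ t))]; ring
    have hfeq : (fun s => ⟪i (u₁ s) - i (u₂ s), i (u₁ s) - i (u₂ s)⟫) = f := funext heq
    rw [hfeq, h3] at h2
    exact h2
  have hderiv_nonpos : ∀ t ∈ Set.Icc (0 : ℝ) T,
      2 * ⟪u₁' t - u₂' t, i (u₁ t) - i (u₂ t)⟫ ≤ 0 := by
    intro t ht
    have h1 := hvi1 t ht (u₂ t) (hK2 t ht)
    have h2 := hvi2 t ht (u₁ t) (hK1 t ht)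
    have hco := ha_coer (u₁ t - u₂ t)
    have hnn : (0:ℝ) ≤ lam * ‖u₁ t - u₂ t‖ ^ 2 := by positivity
    have ha_exp : a (u₁ t - u₂ t) (u₁ t - u₂ t)
        = a (u₁ t) (u₁ t - u₂ t) - a (u₂ t) (u₁ t - u₂ t) := by
      rw [map_sub]; simp only [ContinuousLinearMap.sub_apply, map_sub]
      linarith [ha_symm (u₁ t) (u₂ t)]
    have hinner : ⟪u₁' t - u₂' t, i (u₁ t) - i (u₂ t)⟫
        = ⟪u₁' t, i (u₁ t) - i (u₂ t)⟫ - ⟪u₂' t, i (u₁ t) - i (u₂ t)⟫ := by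
      rw [inner_sub_left]
    have e1 : ⟪u₁' t, i (u₂ t) - i (u₁ t)⟫ = -⟪u₁' t, i (u₁ t) - i (u₂ t)⟫ := by
      rw [← inner_neg_right]; congr 1; abel
    have e2 : ⟪g t, i (u₂ t) - i (u₁ t)⟫ = -⟪g t, i (u₁ t) - i (u₂ t)⟫ := by
      rw [← inner_neg_right]; congr 1; abel
    have e3 : a (u₁ t) (u₂ t - u₁ t) = -a (u₁ t) (u₁ t - u₂ t) := by
      rw [← map_neg]; congr 1; abel
    have e4 : a (u₂ t) (u₂ t - u₁ t) = -a (u₂ t) (u₁ t - u₂ t) := by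
      rw [← map_neg]; congr 1; abel
    rw [e1, e2, e3] at h1
    nlinarith [h1, h2, hco, hnn, ha_exp, hinner, e4]
  have hcontf : Continuous f := by
    apply Continuous.pow
    exact ((i.continuous.comp hc1).sub (i.continuous.comp hc2)).norm
  have hanti : AntitoneOn f (Set.Icc 0 T) := by
    apply antitoneOn_of_deriv_nonpos (convex_Icc 0 T) hcontf.continuousOn
    · intro t ht
      rw [interior_Icc] at ht
      exact (hfd t (Set.mem_Icc_of_Ioo ht)).differentiableAt.differentiableWithinAt
    · intro t ht
      rw [interior_Icc] at ht
      rw [(hfd t (Set.mem_Icc_of_Ioo ht)).deriv]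
      exact hderiv_nonpos t (Set.mem_Icc_of_Ioo ht)
  intro t ht
  have h0 : f 0 = 0 := by simp [hf, h01, h02]
  have hle : f t ≤ f 0 := hanti (Set.left_mem_Icc.2 hT.le) ht ht.1
  have hge : 0 ≤ f t := by positivity
  have hft : ‖i (u₁ t) - i (u₂ t)‖ ^ 2 = 0 := le_antisymm (by have := h0 ▸ hle; simpa [hf] using this) hge
  have hnz : ‖i (u₁ t) - i (u₂ t)‖ = 0 :=
    pow_eq_zero_iff (by norm_num : (2:ℕ) ≠ 0) |>.mp hft
  exact hi_inj (sub_eq_zero.mp (norm_eq_zero.mp hnz))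
end

section
/- Suppose S satisfies the monotony inequality: for all g₁, g₂ ∈ E and all μ ∈ [0,1], ‖S(μ·g₁ + (1−μ)·g₂)‖ ≤ ‖μ·S(g₁) + (1−μ)·S(g₂)‖. Then J is strictly convex on E; in fact, for all g₁ ≠ g₂ in E and all μ ∈ (0,1): J(μ·g₁ + (1−μ)·g₂) ≤ μJ(g₁) + (1−μ)J(g₂) − (M/2)μ(1−μ)‖g₁ − g₂‖² < μJ(g₁) + (1−μ)J(g₂). -/
lemma combo_sq {E : Type*} [NormedAddCommGroup E] [InnerProductSpace ℝ E]
    (a b : E) (μ : ℝ) :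
    ‖μ • a + (1 - μ) • b‖ ^ 2
      = μ * ‖a‖ ^ 2 + (1 - μ) * ‖b‖ ^ 2 - μ * (1 - μ) * ‖a - b‖ ^ 2 := by
  have h : ∀ x : E, ‖x‖ ^ 2 = (inner ℝ x x : ℝ) := fun x => (real_inner_self_eq_norm_sq x).symm
  rw [h, h, h, h]
  simp only [inner_add_add_self, inner_sub_sub_self, inner_smul_left, inner_smul_right,
    RCLike.conj_to_real, real_inner_comm a b]
  ring

-- key: ‖μa+(1-μ)b‖² ≤ μ‖a‖²+(1-μ)‖b‖² when μ∈[0,1]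
lemma combo_sq_le {E : Type*} [NormedAddCommGroup E] [InnerProductSpace ℝ E]
    (a b : E) {μ : ℝ} (h0 : 0 ≤ μ) (h1 : μ ≤ 1) :
    ‖μ • a + (1 - μ) • b‖ ^ 2 ≤ μ * ‖a‖ ^ 2 + (1 - μ) * ‖b‖ ^ 2 := by
  rw [combo_sq]
  have : 0 ≤ μ * (1 - μ) * ‖a - b‖ ^ 2 :=
    mul_nonneg (mul_nonneg h0 (by linarith)) (sq_nonneg _)
  linarith

/-- If `S` satisfies the monotony inequality
`‖S(μ·g₁ + (1−μ)·g₂)‖ ≤ ‖μ·S g₁ + (1−μ)·S g₂‖` for all `g₁, g₂` and `μ ∈ [0,1]`,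
then `J(g) = (1/2)‖S g‖² + (M/2)‖g‖²` is strictly convex on `E`; in fact, for all
`g₁ ≠ g₂` and `μ ∈ (0,1)`:
`J(μ·g₁ + (1−μ)·g₂) ≤ μ J(g₁) + (1−μ) J(g₂) − (M/2)μ(1−μ)‖g₁ − g₂‖²
  < μ J(g₁) + (1−μ) J(g₂)`. -/
theorem stmt_16 {E F : Type*} [NormedAddCommGroup E] [InnerProductSpace ℝ E]
    [NormedAddCommGroup F] [InnerProductSpace ℝ F]
    (S : E → F) (M : ℝ) (hM : 0 < M)
    (J : E → ℝ) (hJ : ∀ g, J g = (1 / 2) * ‖S g‖ ^ 2 + (M / 2) * ‖g‖ ^ 2)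
    (hS : ∀ g₁ g₂ : E, ∀ μ ∈ Set.Icc (0 : ℝ) 1,
      ‖S (μ • g₁ + (1 - μ) • g₂)‖ ≤ ‖μ • S g₁ + (1 - μ) • S g₂‖) :
    StrictConvexOn ℝ Set.univ J ∧
    ∀ g₁ g₂ : E, g₁ ≠ g₂ → ∀ μ ∈ Set.Ioo (0 : ℝ) 1,
      J (μ • g₁ + (1 - μ) • g₂)
          ≤ μ * J g₁ + (1 - μ) * J g₂ - (M / 2) * μ * (1 - μ) * ‖g₁ - g₂‖ ^ 2 ∧
      μ * J g₁ + (1 - μ) * J g₂ - (M / 2) * μ * (1 - μ) * ‖g₁ - g₂‖ ^ 2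
          < μ * J g₁ + (1 - μ) * J g₂ := by
  have key : ∀ g₁ g₂ : E, ∀ μ ∈ Set.Ioo (0 : ℝ) 1,
      J (μ • g₁ + (1 - μ) • g₂)
        ≤ μ * J g₁ + (1 - μ) * J g₂ - (M / 2) * μ * (1 - μ) * ‖g₁ - g₂‖ ^ 2 := by
    intro g₁ g₂ μ hμ
    obtain ⟨h0, h1⟩ := hμ
    have hSle := hS g₁ g₂ μ ⟨h0.le, h1.le⟩
    have hSsq : ‖S (μ • g₁ + (1 - μ) • g₂)‖ ^ 2 ≤ ‖μ • S g₁ + (1 - μ) • S g₂‖ ^ 2 :=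
      pow_le_pow_left₀ (norm_nonneg _) hSle 2
    have h2 : ‖μ • S g₁ + (1 - μ) • S g₂‖ ^ 2 ≤ μ * ‖S g₁‖ ^ 2 + (1 - μ) * ‖S g₂‖ ^ 2 :=
      combo_sq_le _ _ h0.le h1.le
    have h3 := combo_sq g₁ g₂ μ
    rw [hJ, hJ, hJ, h3]
    nlinarith [hM.le]
  have strict : ∀ g₁ g₂ : E, g₁ ≠ g₂ → ∀ μ ∈ Set.Ioo (0 : ℝ) 1,
      (M / 2) * μ * (1 - μ) * ‖g₁ - g₂‖ ^ 2 > 0 := by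
    intro g₁ g₂ hne μ ⟨h0, h1⟩
    have : g₁ - g₂ ≠ 0 := sub_ne_zero.mpr hne
    have hn : 0 < ‖g₁ - g₂‖ := norm_pos_iff.mpr this
    have h1' : (0:ℝ) < 1 - μ := by linarith
    have hM2 : (0:ℝ) < M / 2 := by linarith
    exact mul_pos (mul_pos (mul_pos hM2 h0) h1') (by positivity)
  refine ⟨⟨convex_univ, ?_⟩, fun g₁ g₂ hne μ hμ => ⟨key g₁ g₂ μ hμ, by linarith [strict g₁ g₂ hne μ hμ]⟩⟩
  intro x _ y _ hxy a b ha hb hab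
  have hb' : b = 1 - a := by linarith
  subst hb'
  have hμ : a ∈ Set.Ioo (0 : ℝ) 1 := ⟨ha, by linarith⟩
  have := key x y a hμ
  have := strict x y hxy a hμ
  calc J (a • x + (1 - a) • y) ≤ a * J x + (1 - a) * J y - (M / 2) * a * (1 - a) * ‖x - y‖ ^ 2 := key x y a hμ
    _ < a * J x + (1 - a) * J y := by linarith [strict x y hxy a hμ]
end
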